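/- The class of quasi-Borel subsets of C^ω is closed under the dummy-insertion map ι: if W ⊆ C^ω is quasi-Borel, then ι(W) is quasi-Borel. Consequently (given quasi-Borel determinacy of Gale–Stewart games ⟨C, W⟩), every game ⟨C, D, W'⟩ with quasi-Borel W' and arbitrary D ⊆ C* is determined. -/

import Mathlib

variable {C A O : Type*}

/-- The prefix of length `n` of an infinite play. -/
def pref (p : ℕ → C) (n : ℕ) : List C := List.ofFn (fun i : Fin n => p (i : ℕ))

/-- Plays compatible with a partial strategy profile. -/
def Plays (s : List C → Option C) : Set (ℕ → C) :=
  {p | ∀ (n : ℕ) (c : C), s (pref p n) = some c → p n = c}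

/-- The history of length n induced by a total strategy profile. -/
def hist (t : List C → C) : ℕ → List C
  | 0 => []
  | n + 1 => hist t n ++ [t (hist t n)]

/-- The play induced by a total strategy profile: p(t)_n = t(p(t)_{<n}). -/
def play (t : List C → C) (n : ℕ) : C := t (hist t n)

open Classical in
/-- Restriction of a partial strategy profile to a set of histories. -/
noncomputable def restr (s : List C → Option C) (X : Set (List C)) (γ : List C) : Option C :=
  if γ ∈ X then s γ else none

/-- Restriction of a total strategy profile to a set of histories (as a partial one). -/
noncomputable def restrT (s : List C → C) (X : Set (List C)) : List C → Option C :=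
  restr (fun γ => some (s γ)) X

/-- γC^* : finite sequences extending γ. -/
def ext (γ : List C) : Set (List C) := {δ | γ <+: δ}

/-- γC^ω : infinite sequences extending γ. -/
def extω (γ : List C) : Set (ℕ → C) := {p | pref p γ.length = γ}


/-- A <ₐ-terminal interval. -/
def Terminal (lt : O → O → Prop) (I : Set O) : Prop := ∀ x y, lt x y → x ∈ I → y ∈ I

/-- The guarantee g_a(γ, s) of agent a at node γ under strategy profile s. -/
noncomputable def guar (d : List C → A) (v : (ℕ → C) → O) (lt : A → O → O → Prop)
    (a : A) (γ : List C) (s : List C → C) : Set O :=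
  {o | ∃ p ∈ Plays (restrT s {δ | δ ∈ ext γ ∧ d δ = a}) ∩ extω γ, lt a (v p) o ∨ v p = o}

/-- The best guarantee G_a(γ). -/
noncomputable def bestGuar (d : List C → A) (v : (ℕ → C) → O) (lt : A → O → O → Prop)
    (a : A) (γ : List C) : Set O :=
  ⋂ s : List C → C, guar d v lt a γ s

/-- Nash equilibrium of an infinite sequential game. -/
def NashEq (d : List C → A) (v : (ℕ → C) → O) (prec : A → O → O → Prop)
    (s : List C → C) : Prop :=
  ∀ (a : A) (s' : List C → C), (∀ γ, d γ ≠ a → s' γ = s γ) →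
    ¬ prec a (v (play s)) (v (play s'))

/-- Winning strategy for agent a (owning D) in ⟨C, D, W⟩. -/
def WinA (D : Set (List C)) (W : Set (ℕ → C)) (sa : List C → C) : Prop :=
  ∀ t : List C → C, (∀ γ ∈ D, t γ = sa γ) → play t ∈ W

/-- Winning strategy for agent b (owning C^* \ D) in ⟨C, D, W⟩. -/
def WinB (D : Set (List C)) (W : Set (ℕ → C)) (sb : List C → C) : Prop :=
  ∀ t : List C → C, (∀ γ ∉ D, t γ = sb γ) → play t ∉ W

/-- Determinacy of the two-agent win-lose game ⟨C, D, W⟩. -/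
def Determined (D : Set (List C)) (W : Set (ℕ → C)) : Prop :=
  (∃ sa, WinA D W sa) ∨ (∃ sb, WinB D W sb)


universe u

/-- Quasi-Borel sets of a topological space (Martin 1990). -/
inductive QuasiBorel {X : Type u} [TopologicalSpace X] : Set X → Prop
  | isOpen : ∀ U : Set X, IsOpen U → QuasiBorel U
  | compl : ∀ A : Set X, QuasiBorel A → QuasiBorel Aᶜ
  | iUnion : ∀ f : ℕ → Set X, (∀ n, QuasiBorel (f n)) → QuasiBorel (⋃ n, f n)
  | sepUnion : ∀ (J : Type u) (B D : J → Set X),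
      (∀ j, QuasiBorel (B j)) → (∀ j, IsOpen (D j)) →
      (∀ i j, i ≠ j → Disjoint (D i) (D j)) → (∀ j, B j ⊆ D j) →
      QuasiBorel (⋃ j, B j)

/-- The product of the discrete topology on C^ω. -/
def seqTop (C : Type u) : TopologicalSpace (ℕ → C) :=
  @Pi.topologicalSpace ℕ (fun _ => C) (fun _ => ⊥)

/-- Quasi-Borel subsets of C^ω with the product of the discrete topology. -/
def QB {C : Type u} (W : Set (ℕ → C)) : Prop :=
  @QuasiBorel (ℕ → C) (seqTop C) W

variable {C : Type u}

open Classical in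
/-- Dummy-insertion on finite sequences, processing from prefix `pre`. -/
noncomputable def iotaFrom (D : Set (List C)) (c0 : C) : List C → List C → List C
  | _, [] => []
  | pre, c :: rest =>
      (if ((pre ∈ D) ↔ (pre ++ [c] ∈ D)) then [c, c0] else [c]) ++
        iotaFrom D c0 (pre ++ [c]) rest

/-- Dummy-insertion map ι on finite sequences. -/
noncomputable def iota (D : Set (List C)) (c0 : C) (γ : List C) : List C :=
  iotaFrom D c0 [] γ

/-- Dummy-insertion map ι on infinite sequences: ι(α)_n is the n-th entry of
ι applied to a long enough prefix of α. -/
noncomputable def iotaSeq (D : Set (List C)) (c0 : C) (α : ℕ → C) (n : ℕ) : C :=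
  (iota D c0 (List.ofFn (fun i : Fin (n + 1) => α (i : ℕ)))).getD n c0

section IotaLemmas
variable {C : Type u} (D : Set (List C)) (c0 : C)

lemma pref_length (p : ℕ → C) (n : ℕ) : (pref p n).length = n := List.length_ofFn

lemma pref_getElem (p : ℕ → C) {i n : ℕ} (h : i < (pref p n).length) :
    (pref p n)[i] = p i := List.getElem_ofFn _

lemma pref_snoc (p : ℕ → C) (n : ℕ) : pref p (n + 1) = pref p n ++ [p n] := by
  unfold pref
  rw [List.ofFn_succ']
  simp [List.concat_eq_append]

lemma pref_prefix (p : ℕ → C) {m n : ℕ} (h : m ≤ n) : pref p m <+: pref p n := by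
  rw [List.prefix_iff_eq_take]
  apply List.ext_getElem
  · simp [pref_length]; omega
  · intro i h1 h2
    rw [pref_getElem, List.getElem_take, pref_getElem]

lemma iotaFrom_append (pre l m : List C) :
    iotaFrom D c0 pre (l ++ m) = iotaFrom D c0 pre l ++ iotaFrom D c0 (pre ++ l) m := by
  induction l generalizing pre with
  | nil => simp [iotaFrom]
  | cons c rest ih =>
    show _ ++ iotaFrom D c0 (pre ++ [c]) (rest ++ m) = _
    rw [ih (pre ++ [c])]
    simp [iotaFrom, List.append_assoc]

lemma iota_snoc_pos {γ : List C} {c : C} (h : γ ∈ D ↔ γ ++ [c] ∈ D) :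
    iota D c0 (γ ++ [c]) = iota D c0 γ ++ [c, c0] := by
  unfold iota
  rw [iotaFrom_append]
  simp only [List.nil_append, iotaFrom]
  rw [if_pos h]
  simp

lemma iota_snoc_neg {γ : List C} {c : C} (h : ¬ (γ ∈ D ↔ γ ++ [c] ∈ D)) :
    iota D c0 (γ ++ [c]) = iota D c0 γ ++ [c] := by
  unfold iota
  rw [iotaFrom_append]
  simp only [List.nil_append, iotaFrom]
  rw [if_neg h]
  simp

lemma length_le_iota (γ : List C) : γ.length ≤ (iota D c0 γ).length := by
  induction γ using List.reverseRecOn with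
  | nil => simp
  | append_singleton γ c ih =>
    by_cases h : γ ∈ D ↔ γ ++ [c] ∈ D
    · rw [iota_snoc_pos D c0 h]; simp; omega
    · rw [iota_snoc_neg D c0 h]; simp; omega

lemma iota_prefix {γ δ : List C} (h : γ <+: δ) : iota D c0 γ <+: iota D c0 δ := by
  obtain ⟨r, rfl⟩ := h
  unfold iota
  rw [iotaFrom_append]
  exact List.prefix_append _ _

/-- The element of any `iota`-extension of `iota (γ ++ [c])` at position `(iota γ).length` is c. -/
lemma iota_snoc_getElem {γ : List C} {c : C} {v : List C}
    (h : iota D c0 (γ ++ [c]) <+: v) (hk : (iota D c0 γ).length < v.length) :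
    v[(iota D c0 γ).length] = c := by
  by_cases hs : γ ∈ D ↔ γ ++ [c] ∈ D
  · rw [iota_snoc_pos D c0 hs] at h
    have h0 : (iota D c0 γ ++ [c, c0])[(iota D c0 γ).length]'(by simp) = c := by
      rw [List.getElem_append_right (le_refl _)]
      simp
    rw [← h.getElem (by simp)]
    exact h0
  · rw [iota_snoc_neg D c0 hs] at h
    have h0 : (iota D c0 γ ++ [c])[(iota D c0 γ).length]'(by simp) = c := by
      rw [List.getElem_append_right (le_refl _)]
      simp
    rw [← h.getElem (by simp)]
    exact h0

lemma prefix_of_iota_prefix {γ δ : List C} (h : iota D c0 γ <+: iota D c0 δ) : γ <+: δ := by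
  induction γ using List.reverseRecOn with
  | nil => exact List.nil_prefix
  | append_singleton γ' c ih =>
    have hlen1 : (iota D c0 γ').length < (iota D c0 (γ' ++ [c])).length := by
      by_cases hs : γ' ∈ D ↔ γ' ++ [c] ∈ D
      · rw [iota_snoc_pos D c0 hs]; simp
      · rw [iota_snoc_neg D c0 hs]; simp
    have hp : γ' <+: δ := ih ((iota_prefix D c0 (List.prefix_append γ' [c])).trans h)
    have hlen : γ'.length < δ.length := by
      rcases lt_or_ge γ'.length δ.length with h' | h'
      · exact h'
      · exfalso
        have : γ' = δ := hp.eq_of_length (le_antisymm hp.length_le h')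
        subst this
        have := h.length_le
        omega
    have hsub : γ' ++ [δ[γ'.length]] <+: δ := by
      have hlg : (γ' ++ [δ[γ'.length]]).length = γ'.length + 1 := by simp
      rw [List.prefix_iff_eq_take, hlg, ← List.take_concat_get hlen,
        List.concat_eq_append]
      congr 1
      rw [List.prefix_iff_eq_take] at hp; rw [← hp]
    have hk : (iota D c0 γ').length < (iota D c0 δ).length :=
      lt_of_lt_of_le hlen1 h.length_le
    have h1 : (iota D c0 δ)[(iota D c0 γ').length] = c :=
      iota_snoc_getElem D c0 h hk
    have h2 : (iota D c0 δ)[(iota D c0 γ').length] = δ[γ'.length] :=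
      iota_snoc_getElem D c0 (iota_prefix D c0 hsub) hk
    rw [h1] at h2
    rw [h2]
    exact hsub

lemma iota_inj {γ δ : List C} (h : iota D c0 γ = iota D c0 δ) : γ = δ :=
  (prefix_of_iota_prefix D c0 (h ▸ List.prefix_refl _)).eq_of_length
    (le_antisymm (prefix_of_iota_prefix D c0 (h ▸ List.prefix_refl _)).length_le
      (prefix_of_iota_prefix D c0 (h ▸ List.prefix_refl _)).length_le)

lemma iota_parity (hD : ([] : List C) ∈ D) (γ : List C) :
    (γ ∈ D ↔ Even (iota D c0 γ).length) := by
  induction γ using List.reverseRecOn with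
  | nil => simpa [iota, iotaFrom] using hD
  | append_singleton γ c ih =>
    by_cases hs : γ ∈ D ↔ γ ++ [c] ∈ D
    · rw [iota_snoc_pos D c0 hs]
      have : ((iota D c0 γ) ++ [c, c0]).length = (iota D c0 γ).length + 2 := by simp
      rw [this]
      rw [← hs, ih]
      simp [Nat.even_add]
    · rw [iota_snoc_neg D c0 hs]
      have : ((iota D c0 γ) ++ [c]).length = (iota D c0 γ).length + 1 := by simp
      rw [this, Nat.even_add_one, ← ih]
      tauto

end IotaLemmas
section IotaSeqLemmas
variable {C : Type u} (D : Set (List C)) (c0 : C)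

lemma iotaSeq_def (α : ℕ → C) (n : ℕ) :
    iotaSeq D c0 α n = (iota D c0 (pref α (n + 1))).getD n c0 := rfl

/-- Two "prefixes" of the same infinite play are comparable. -/
lemma comp_of_pref {p : ℕ → C} {u v : List C} (h1 : pref p u.length = u)
    (h2 : pref p v.length = v) : u <+: v ∨ v <+: u := by
  rcases le_total u.length v.length with h | h
  · left; rw [← h1, ← h2]; exact pref_prefix p h
  · right; rw [← h1, ← h2]; exact pref_prefix p h

lemma pref_restrict {p : ℕ → C} {u v : List C} (h1 : pref p u.length = u) (h2 : v <+: u) :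
    pref p v.length = v := by
  have ha : pref p v.length <+: u := by
    rw [← h1]; exact pref_prefix p h2.length_le
  rcases List.prefix_or_prefix_of_prefix ha h2 with h | h
  · exact h.eq_of_length (by rw [pref_length])
  · exact (h.eq_of_length (by rw [pref_length])).symm

/-- Key coherence: the prefix of `iotaSeq α` of length `(iota (pref α m)).length`
is exactly `iota (pref α m)`. -/
lemma pref_iotaSeq (α : ℕ → C) (m : ℕ) :
    pref (iotaSeq D c0 α) (iota D c0 (pref α m)).length = iota D c0 (pref α m) := by
  apply List.ext_getElem (by rw [pref_length])
  intro n h1 h2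
  rw [pref_getElem]
  rw [iotaSeq_def]
  have hn1 : n < (iota D c0 (pref α (n + 1))).length :=
    lt_of_lt_of_le (by rw [pref_length]; omega) (length_le_iota D c0 _)
  rw [List.getD_eq_getElem _ _ hn1]
  rcases le_total (n + 1) m with h | h
  · have hp : iota D c0 (pref α (n + 1)) <+: iota D c0 (pref α m) :=
      iota_prefix D c0 (pref_prefix α h)
    exact hp.getElem hn1
  · have hp : iota D c0 (pref α m) <+: iota D c0 (pref α (n + 1)) :=
      iota_prefix D c0 (pref_prefix α h)
    exact (hp.getElem h2).symm

lemma decode_unique {p : ℕ → C} {γ δ : List C}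
    (hp : pref p (iota D c0 γ).length = iota D c0 γ)
    (hq : pref p (iota D c0 δ).length = iota D c0 δ)
    (hlen : γ.length = δ.length) : γ = δ := by
  rcases comp_of_pref hp hq with h | h
  · exact (prefix_of_iota_prefix D c0 h).eq_of_length hlen
  · exact ((prefix_of_iota_prefix D c0 h).eq_of_length hlen.symm).symm

lemma iotaSeq_inj {α β : ℕ → C} (h : iotaSeq D c0 α = iotaSeq D c0 β) : α = β := by
  have key : ∀ m, pref α m = pref β m := by
    intro m
    have h1 := pref_iotaSeq D c0 α m
    have h2 := pref_iotaSeq D c0 β m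
    rw [h] at h1
    exact decode_unique D c0 h1 h2 (by rw [pref_length, pref_length])
  funext n
  have := key (n + 1)
  have h1 : (pref α (n+1))[n]'(by rw [pref_length]; omega) =
      (pref β (n+1))[n]'(by rw [pref_length]; omega) := by
    simp only [this]
  rwa [pref_getElem, pref_getElem] at h1

lemma image_extω (γ : List C) :
    iotaSeq D c0 '' extω γ = extω (iota D c0 γ) ∩ iotaSeq D c0 '' Set.univ := by
  ext p
  constructor
  · rintro ⟨α, hα, rfl⟩
    refine ⟨?_, Set.mem_image_of_mem _ trivial⟩
    have hh : pref α γ.length = γ := hα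
    have := pref_iotaSeq D c0 α γ.length
    rw [hh] at this
    exact this
  · rintro ⟨h1, β, -, rfl⟩
    refine ⟨β, ?_, rfl⟩
    have h2 := pref_iotaSeq D c0 β γ.length
    have h3 : pref β γ.length = γ :=
      decode_unique D c0 h2 h1 (by rw [pref_length])
    exact h3

lemma mem_image_univ_iff (p : ℕ → C) :
    p ∈ iotaSeq D c0 '' Set.univ ↔
      ∀ m : ℕ, ∃ γ : List C, γ.length = m ∧ pref p (iota D c0 γ).length = iota D c0 γ := by
  constructor
  · rintro ⟨α, -, rfl⟩ m
    exact ⟨pref α m, pref_length α m, pref_iotaSeq D c0 α m⟩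
  · intro h
    choose γf hlen hpref using h
    have coh : ∀ m n : ℕ, m ≤ n → γf m <+: γf n := by
      intro m n hmn
      rcases comp_of_pref (hpref m) (hpref n) with h | h
      · exact prefix_of_iota_prefix D c0 h
      · have h' := prefix_of_iota_prefix D c0 h
        have hnm : n ≤ m := by have := h'.length_le; rw [hlen, hlen] at this; exact this
        have : γf n = γf m := h'.eq_of_length (by rw [hlen, hlen]; omega)
        rw [this]
    refine ⟨fun n => (γf (n + 1)).getD n c0, trivial, ?_⟩
    set α : ℕ → C := fun n => (γf (n + 1)).getD n c0 with hα
    have hpa : ∀ m, pref α m = γf m := by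
      intro m
      apply List.ext_getElem (by rw [pref_length, hlen])
      intro i h1 h2
      rw [pref_getElem]
      have hi1 : i < (γf (i + 1)).length := by rw [hlen]; omega
      show (γf (i + 1)).getD i c0 = (γf m)[i]
      rw [List.getD_eq_getElem _ _ hi1]
      exact (coh (i + 1) m (by rw [hlen] at h2; omega)).getElem hi1
    funext k
    rw [iotaSeq_def, hpa (k + 1)]
    have hk : k < (iota D c0 (γf (k + 1))).length :=
      lt_of_lt_of_le (by rw [hlen]; omega) (length_le_iota D c0 _)
    rw [List.getD_eq_getElem _ _ hk]
    have := hpref (k + 1)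
    calc (iota D c0 (γf (k + 1)))[k] = (pref p (iota D c0 (γf (k+1))).length)[k]'(by rwa [pref_length]) := by
          simp only [this]
      _ = p k := pref_getElem p _

end IotaSeqLemmas
section TopLemmas
variable {C : Type u}

lemma seqTop_eq : seqTop C = @Pi.topologicalSpace ℕ (fun _ => C) (fun _ => ⊥) := rfl

lemma mem_extω_iff {p : ℕ → C} {γ : List C} :
    p ∈ extω γ ↔ ∀ i (_ : i < γ.length), p i = γ[i] := by
  show pref p γ.length = γ ↔ _
  constructor
  · intro h i hi
    have h2 := List.getElem_of_eq h.symm hi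
    rw [pref_getElem] at h2
    exact h2.symm
  · intro h
    apply List.ext_getElem (pref_length _ _)
    intro n h1 h2
    rw [pref_getElem]
    exact h n h2

lemma isOpen_extω (γ : List C) : @IsOpen _ (seqTop C) (extω γ) := by
  rw [seqTop_eq]
  letI : TopologicalSpace C := ⊥
  haveI : DiscreteTopology C := discreteTopology_bot C
  have : extω γ = ⋂ i : Fin γ.length, (fun p : ℕ → C => p (i : ℕ)) ⁻¹' {γ[(i : ℕ)]} := by
    ext p
    rw [mem_extω_iff]
    simp only [Set.mem_iInter, Set.mem_preimage, Set.mem_singleton_iff]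
    constructor
    · intro h i; exact h i i.isLt
    · intro h i hi; exact h ⟨i, hi⟩
  rw [this]
  exact isOpen_iInter_of_finite fun i =>
    (continuous_apply (i : ℕ)).isOpen_preimage _ (isOpen_discrete _)

lemma self_mem_extω_pref (p : ℕ → C) (n : ℕ) : p ∈ extω (pref p n) := by
  show pref p (pref p n).length = pref p n
  rw [pref_length]

lemma extω_subset_of_prefix {γ δ : List C} (h : γ <+: δ) : extω δ ⊆ extω γ := by
  intro q hq
  exact pref_restrict hq h

lemma extω_nonempty [Nonempty C] (γ : List C) : (extω γ).Nonempty := by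
  classical
  refine ⟨fun n => γ.getD n (Classical.arbitrary C), ?_⟩
  rw [mem_extω_iff]
  intro i hi
  exact List.getD_eq_getElem _ _ hi

lemma open_eq_iUnion_extω (U : Set (ℕ → C)) (hU : @IsOpen _ (seqTop C) U) :
    U = ⋃ γ : {γ : List C // extω γ ⊆ U}, extω (γ : List C) := by
  rw [seqTop_eq] at hU
  letI : TopologicalSpace C := ⊥
  ext p
  constructor
  · intro hp
    obtain ⟨I, u, hu, hsub⟩ := isOpen_pi_iff.mp hU p hp
    set n := I.sup id + 1 with hn
    have hss : extω (pref p n) ⊆ U := by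
      intro q hq
      rw [mem_extω_iff] at hq
      apply hsub
      intro a ha
      have han : a < n := by
        have := Finset.le_sup (f := id) ha
        simp only [id] at this
        omega
      have : q a = p a := by
        have := hq a (by rw [pref_length]; exact han)
        rwa [pref_getElem] at this
      rw [this]
      exact (hu a ha).2
    exact Set.mem_iUnion.2 ⟨⟨pref p n, hss⟩, self_mem_extω_pref p n⟩
  · intro hp
    obtain ⟨γ, hγ⟩ := Set.mem_iUnion.1 hp
    exact γ.2 hγ

end TopLemmas

section QBLemmas
variable {X : Type u} [TopologicalSpace X]

lemma QuasiBorel.union {A B : Set X} (hA : QuasiBorel A) (hB : QuasiBorel B) :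
    QuasiBorel (A ∪ B) := by
  have : A ∪ B = ⋃ n : ℕ, (fun n => if n = 0 then A else B) n := by
    ext x
    simp only [Set.mem_iUnion, Set.mem_union]
    constructor
    · rintro (h | h)
      · exact ⟨0, by simpa⟩
      · exact ⟨1, by simpa⟩
    · rintro ⟨n, hn⟩
      by_cases h : n = 0
      · left; simpa [h] using hn
      · right; simpa [h] using hn
  rw [this]
  refine QuasiBorel.iUnion _ fun n => ?_
  by_cases h : n = 0
  · simpa [h] using hA
  · simpa [h] using hB

lemma QuasiBorel.inter {A B : Set X} (hA : QuasiBorel A) (hB : QuasiBorel B) :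
    QuasiBorel (A ∩ B) := by
  have : A ∩ B = (Aᶜ ∪ Bᶜ)ᶜ := by rw [Set.compl_union, compl_compl, compl_compl]
  rw [this]
  exact QuasiBorel.compl _ ((QuasiBorel.compl _ hA).union (QuasiBorel.compl _ hB))

end QBLemmas

section Part1
variable {C : Type u} (D : Set (List C)) (c0 : C)

lemma isOpen_iUnion_extω {ι : Sort v} (g : ι → List C) :
    @IsOpen _ (seqTop C) (⋃ i, extω (g i)) :=
  @isOpen_iUnion _ _ (seqTop C) _ (fun i => isOpen_extω _)

lemma qb_image_univ : QB (iotaSeq D c0 '' Set.univ) := by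
  letI : TopologicalSpace (ℕ → C) := seqTop C
  have hval : iotaSeq D c0 '' Set.univ =
      (⋃ m : ℕ, (⋃ γ : {l : List C // l.length = m}, extω (iota D c0 (γ : List C)))ᶜ)ᶜ := by
    ext p
    simp only [Set.mem_compl_iff, Set.mem_iUnion, not_exists, not_not, not_exists]
    rw [mem_image_univ_iff]
    constructor
    · intro h m
      obtain ⟨γ, hγl, hγp⟩ := h m
      intro hm
      exact hm ⟨γ, hγl⟩ hγp
    · intro h m
      have := h m
      rw [not_forall] at this
      obtain ⟨γ, hγ⟩ := this
      rw [not_not] at hγ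
      exact ⟨(γ : List C), γ.2, hγ⟩
  rw [hval]
  refine QuasiBorel.compl _ (QuasiBorel.iUnion _ fun m => QuasiBorel.compl _ ?_)
  exact QuasiBorel.isOpen _ (isOpen_iUnion_extω _)

lemma qb_image [Nonempty C] (W : Set (ℕ → C)) (hW : QB W) : QB (iotaSeq D c0 '' W) := by
  letI : TopologicalSpace (ℕ → C) := seqTop C
  have hIm : QB (iotaSeq D c0 '' Set.univ) := qb_image_univ D c0
  have hinj : Function.Injective (iotaSeq D c0) := fun a b h => iotaSeq_inj D c0 h
  induction hW with
  | isOpen U hU =>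
    rw [open_eq_iUnion_extω U hU, Set.image_iUnion]
    have heq : (⋃ γ : {γ : List C // extω γ ⊆ U}, iotaSeq D c0 '' extω (γ : List C))
        = (⋃ γ : {γ : List C // extω γ ⊆ U}, extω (iota D c0 (γ : List C)))
            ∩ iotaSeq D c0 '' Set.univ := by
      rw [Set.iUnion_inter]
      simp only [image_extω]
    rw [heq]
    exact QuasiBorel.inter (QuasiBorel.isOpen _ (isOpen_iUnion_extω _)) hIm
  | compl A hA ih =>
    have heq : iotaSeq D c0 '' Aᶜ = iotaSeq D c0 '' Set.univ ∩ (iotaSeq D c0 '' A)ᶜ := by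
      rw [Set.compl_eq_univ_diff, Set.image_diff hinj, Set.diff_eq]
    rw [heq]
    exact QuasiBorel.inter hIm (QuasiBorel.compl _ ih)
  | iUnion f hf ih =>
    rw [Set.image_iUnion]
    exact QuasiBorel.iUnion _ ih
  | sepUnion J B Ds hB hDs hdisj hsub ih =>
    rw [Set.image_iUnion]
    refine QuasiBorel.sepUnion J _
      (fun j => ⋃ γ : {γ : List C // extω γ ⊆ Ds j}, extω (iota D c0 (γ : List C)))
      ih (fun j => isOpen_iUnion_extω _) ?_ ?_
    · intro i j hij
      rw [Set.disjoint_left]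
      rintro p hpi hpj
      obtain ⟨γ, hγ⟩ := Set.mem_iUnion.1 hpi
      obtain ⟨δ, hδ⟩ := Set.mem_iUnion.1 hpj
      have hcomp : (γ : List C) <+: (δ : List C) ∨ (δ : List C) <+: (γ : List C) := by
        rcases comp_of_pref hγ hδ with h | h
        · exact Or.inl (prefix_of_iota_prefix D c0 h)
        · exact Or.inr (prefix_of_iota_prefix D c0 h)
      rcases hcomp with h | h
      · obtain ⟨q, hq⟩ := extω_nonempty (δ : List C)
        exact Set.disjoint_left.mp (hdisj i j hij)
          (γ.2 (extω_subset_of_prefix h hq)) (δ.2 hq)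
      · obtain ⟨q, hq⟩ := extω_nonempty (γ : List C)
        exact Set.disjoint_left.mp (hdisj i j hij)
          (γ.2 hq) (δ.2 (extω_subset_of_prefix h hq))
    · intro j
      rintro p ⟨β, hβ, rfl⟩
      have hβD : β ∈ Ds j := hsub j hβ
      rw [open_eq_iUnion_extω (Ds j) (hDs j)] at hβD
      obtain ⟨γ, hγ⟩ := Set.mem_iUnion.1 hβD
      refine Set.mem_iUnion.2 ⟨γ, ?_⟩
      have key := pref_iotaSeq D c0 β (γ : List C).length
      rw [show pref β (γ : List C).length = (γ : List C) from hγ] at key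
      exact key

end Part1
section GameLemmas
variable {C : Type u} (D : Set (List C)) (c0 : C)

lemma hist_eq_pref_play (t : List C → C) (n : ℕ) : hist t n = pref (play t) n := by
  induction n with
  | zero => simp [hist, pref]
  | succ n ih =>
    show hist t n ++ [t (hist t n)] = _
    rw [pref_snoc, ← ih]
    rfl

lemma play_def (t : List C → C) (n : ℕ) : play t n = t (hist t n) := rfl

lemma eq_fun_of_pref {w v : ℕ → C} (h : ∀ n, pref w n = pref v n) : w = v := by
  funext k
  have h1 : (pref w (k+1))[k]'(by rw [pref_length]; omega) =
      (pref v (k+1))[k]'(by rw [pref_length]; omega) := by simp only [h (k+1)]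
  rwa [pref_getElem, pref_getElem] at h1

lemma determined_symm {D : Set (List C)} {W : Set (ℕ → C)} (h : Determined Dᶜ Wᶜ) :
    Determined D W := by
  rcases h with ⟨s, hs⟩ | ⟨s, hs⟩
  · exact Or.inr ⟨s, fun t ht => hs t (fun γ hγ => ht γ hγ)⟩
  · exact Or.inl ⟨s, fun t ht => not_not.mp (hs t (fun γ hγ => ht γ (not_not.mp hγ)))⟩

lemma extω_snoc {p : ℕ → C} {δ : List C} {c : C} :
    p ∈ extω (δ ++ [c]) ↔ p ∈ extω δ ∧ p δ.length = c := by
  have hl : (δ ++ [c]).length = δ.length + 1 := by simp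
  show pref p (δ ++ [c]).length = δ ++ [c] ↔ pref p δ.length = δ ∧ p δ.length = c
  rw [hl, pref_snoc]
  constructor
  · intro h
    obtain ⟨h1, h2⟩ := List.append_inj h (by rw [pref_length])
    exact ⟨h1, by simpa using h2⟩
  · rintro ⟨h1, h2⟩
    rw [h1, h2]

/-- The extension of a strict prefix by the next element. -/
lemma prefix_snoc_getElem {γ δ : List C} (hp : γ <+: δ) (hlen : γ.length < δ.length) :
    γ ++ [δ[γ.length]] <+: δ := by
  have hlg : (γ ++ [δ[γ.length]]).length = γ.length + 1 := by simp
  rw [List.prefix_iff_eq_take, hlg, ← List.take_concat_get hlen,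
    List.concat_eq_append]
  congr 1
  rw [List.prefix_iff_eq_take] at hp; rw [← hp]

/-- A "pending dummy" node is never in the image of ι. -/
lemma dummy_not_image {γ : List C} {c : C} (hs : γ ∈ D ↔ γ ++ [c] ∈ D) :
    ¬ ∃ δ : List C, iota D c0 δ = iota D c0 γ ++ [c] := by
  rintro ⟨δ, hδ⟩
  have hpre : iota D c0 γ <+: iota D c0 δ := by
    rw [hδ]; exact List.prefix_append _ _
  have hγδ : γ <+: δ := prefix_of_iota_prefix D c0 hpre
  have hld : (iota D c0 δ).length = (iota D c0 γ).length + 1 := by rw [hδ]; simp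
  have hlt : γ.length < δ.length := by
    rcases lt_or_ge γ.length δ.length with h | h
    · exact h
    · exfalso
      have : γ = δ := hγδ.eq_of_length (le_antisymm hγδ.length_le h)
      subst this
      omega
  have hsub : γ ++ [δ[γ.length]] <+: δ := prefix_snoc_getElem hγδ hlt
  have hk : (iota D c0 γ).length < (iota D c0 δ).length := by omega
  have h1 : (iota D c0 δ)[(iota D c0 γ).length] = δ[γ.length] :=
    iota_snoc_getElem D c0 (iota_prefix D c0 hsub) hk
  have h2 : (iota D c0 δ)[(iota D c0 γ).length] = c := by
    have h3 := List.getElem_of_eq hδ hk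
    rw [List.getElem_append_right (le_refl _)] at h3
    simpa using h3
  rw [h2] at h1
  rw [← h1] at hsub
  have := (iota_prefix D c0 hsub).length_le
  rw [iota_snoc_pos D c0 hs] at this
  simp at this
  omega

open Classical in
/-- Plays where somebody (necessarily agent b if the position parity is odd)
deviates from the required dummy move. -/
noncomputable def badB : Set (ℕ → C) :=
  ⋃ γ : List C, ⋃ c : C, ⋃ c' : C,
    if ((γ ∈ D ↔ γ ++ [c] ∈ D) ∧ c' ≠ c0 ∧ Odd ((iota D c0 γ).length + 1))
    then extω (iota D c0 γ ++ [c, c']) else ∅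

lemma badB_open : @IsOpen _ (seqTop C) (badB D c0) := by
  letI : TopologicalSpace (ℕ → C) := seqTop C
  refine isOpen_iUnion fun γ => isOpen_iUnion fun c => isOpen_iUnion fun c' => ?_
  split
  · exact isOpen_extω _
  · exact isOpen_empty

lemma mem_badB_iff (p : ℕ → C) :
    p ∈ badB D c0 ↔ ∃ γ : List C,
      pref p (iota D c0 γ).length = iota D c0 γ ∧
      (γ ∈ D ↔ γ ++ [p (iota D c0 γ).length] ∈ D) ∧
      Odd ((iota D c0 γ).length + 1) ∧
      p ((iota D c0 γ).length + 1) ≠ c0 := by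
  have hsplit : ∀ (δ : List C) (c c' : C), p ∈ extω (δ ++ [c, c']) ↔
      pref p δ.length = δ ∧ p δ.length = c ∧ p (δ.length + 1) = c' := by
    intro δ c c'
    have : δ ++ [c, c'] = (δ ++ [c]) ++ [c'] := by simp
    rw [this, extω_snoc, extω_snoc]
    have : (δ ++ [c]).length = δ.length + 1 := by simp
    rw [this]
    tauto
  constructor
  · intro h
    simp only [badB, Set.mem_iUnion] at h
    obtain ⟨γ, c, c', hm⟩ := h
    by_cases hcond : ((γ ∈ D ↔ γ ++ [c] ∈ D) ∧ c' ≠ c0 ∧ Odd ((iota D c0 γ).length + 1))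
    · rw [if_pos hcond] at hm
      rw [hsplit] at hm
      obtain ⟨h1, h2, h3⟩ := hm
      refine ⟨γ, h1, ?_, hcond.2.2, ?_⟩
      · rw [h2]; exact hcond.1
      · rw [h3]; exact hcond.2.1
    · rw [if_neg hcond] at hm
      exact absurd hm (Set.notMem_empty p)
  · rintro ⟨γ, h1, h2, h3, h4⟩
    simp only [badB, Set.mem_iUnion]
    refine ⟨γ, p (iota D c0 γ).length, p ((iota D c0 γ).length + 1), ?_⟩
    rw [if_pos ⟨h2, h4, h3⟩, hsplit]
    exact ⟨h1, rfl, rfl⟩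

end GameLemmas
section Part2
variable {C : Type u} (D : Set (List C)) (c0 : C)

lemma hist_length (t : List C → C) (n : ℕ) : (hist t n).length = n := by
  induction n <;> simp [hist, *]

open Classical in
/-- The transfer of a strategy profile from the original game to the Gale-Stewart game. -/
noncomputable def tstar (t f : List C → C) : List C → C :=
  fun δ => if h : ∃ γ, iota D c0 γ = δ then t h.choose else f δ

lemma tstar_image (t f : List C → C) (γ : List C) : tstar D c0 t f (iota D c0 γ) = t γ := by
  unfold tstar
  rw [dif_pos ⟨γ, rfl⟩]
  congr 1
  exact iota_inj D c0 (⟨γ, rfl⟩ : ∃ γ', iota D c0 γ' = iota D c0 γ).choose_spec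

lemma tstar_nonimage (t f : List C → C) (δ : List C) (h : ¬ ∃ γ, iota D c0 γ = δ) :
    tstar D c0 t f δ = f δ := dif_neg h

lemma play_tstar_at (t f : List C → C) {γ : List C}
    (h : pref (play (tstar D c0 t f)) (iota D c0 γ).length = iota D c0 γ) :
    play (tstar D c0 t f) (iota D c0 γ).length = t γ := by
  rw [play_def, hist_eq_pref_play, h, tstar_image]

lemma play_tstar_dummy (t f : List C → C) {γ : List C}
    (h : pref (play (tstar D c0 t f)) (iota D c0 γ).length = iota D c0 γ)
    (hs : γ ∈ D ↔ γ ++ [t γ] ∈ D) :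
    play (tstar D c0 t f) ((iota D c0 γ).length + 1) = f (iota D c0 γ ++ [t γ]) := by
  rw [play_def, hist_eq_pref_play, pref_snoc, h, play_tstar_at D c0 t f h]
  exact tstar_nonimage D c0 t f _ (dummy_not_image D c0 hs)

/-- Decoding the original play from a Gale-Stewart play in the image of ι. -/
lemma pref_eq_hist_of_seq (t t' : List C → C) (hF1 : ∀ γ, t' (iota D c0 γ) = t γ)
    {w : ℕ → C} (hw : iotaSeq D c0 w = play t') : ∀ n, pref w n = hist t n := by
  intro n
  induction n with
  | zero => simp [hist, pref]
  | succ n ih =>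
    have key : pref (play t') (iota D c0 (pref w (n+1))).length = iota D c0 (pref w (n+1)) := by
      rw [← hw]; exact pref_iotaSeq D c0 w (n+1)
    have hsnoc := pref_snoc w n
    have hlt : (iota D c0 (pref w n)).length < (iota D c0 (pref w (n+1))).length := by
      by_cases hs : pref w n ∈ D ↔ pref w n ++ [w n] ∈ D
      · rw [hsnoc, iota_snoc_pos D c0 hs]; simp
      · rw [hsnoc, iota_snoc_neg D c0 hs]; simp
    have hpn : pref (play t') (iota D c0 (pref w n)).length = iota D c0 (pref w n) :=
      pref_restrict key (iota_prefix D c0 (by rw [hsnoc]; exact List.prefix_append _ _))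
    have hwn : w n = play t' (iota D c0 (pref w n)).length := by
      have h1 : (iota D c0 (pref w (n+1)))[(iota D c0 (pref w n)).length]'hlt = w n := by
        apply iota_snoc_getElem D c0 _ hlt
        rw [hsnoc]
      have h2 := List.getElem_of_eq key.symm hlt
      rw [h2, pref_getElem] at h1
      exact h1.symm
    have hplay : play t' (iota D c0 (pref w n)).length = t (pref w n) := by
      rw [play_def, hist_eq_pref_play, hpn, hF1]
    have hw2 : w n = t (hist t n) := by rw [hwn, hplay, ih]
    rw [hsnoc, ih, hw2]
    rfl

include c0 in
lemma part2_main [Nonempty C]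
    (H : ∀ W : Set (ℕ → C), QB W → Determined {γ : List C | Even γ.length} W)
    (hD : ([] : List C) ∈ D) (W' : Set (ℕ → C)) (hW' : QB W') : Determined D W' := by
  classical
  have hQB : QB (iotaSeq D c0 '' W' ∪ badB D c0) := by
    letI : TopologicalSpace (ℕ → C) := seqTop C
    exact QuasiBorel.union (qb_image D c0 W' hW') (QuasiBorel.isOpen _ (badB_open D c0))
  rcases H _ hQB with ⟨σ, hσ⟩ | ⟨σ, hσ⟩
  · -- agent a has a winning strategy in the Gale-Stewart game
    left
    refine ⟨fun γ => σ (iota D c0 γ), fun t ht => ?_⟩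
    set f : List C → C := fun δ => if Even δ.length then σ δ else c0 with hf
    have hagree : ∀ δ ∈ {γ : List C | Even γ.length}, tstar D c0 t f δ = σ δ := by
      intro δ hδ
      have hδe : Even δ.length := hδ
      by_cases h : ∃ γ, iota D c0 γ = δ
      · obtain ⟨γ, rfl⟩ := h
        rw [tstar_image]
        exact ht γ ((iota_parity D c0 hD γ).mpr hδe)
      · rw [tstar_nonimage D c0 t f δ h, hf]
        exact if_pos hδe
    have hin : play (tstar D c0 t f) ∈ iotaSeq D c0 '' W' ∪ badB D c0 := hσ _ hagree
    have hnb : play (tstar D c0 t f) ∉ badB D c0 := by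
      rw [mem_badB_iff]
      rintro ⟨γ, h1, h2, h3, h4⟩
      rw [play_tstar_at D c0 t f h1] at h2
      apply h4
      rw [play_tstar_dummy D c0 t f h1 h2, hf]
      beta_reduce
      have hne : ¬ Even ((iota D c0 γ ++ [t γ]).length) := by
        simp only [List.length_append, List.length_cons, List.length_nil]
        exact (Nat.not_even_iff_odd).mpr h3
      rw [if_neg hne]
    rcases hin with ⟨w, hw, hww⟩ | hbad
    · have hkey := pref_eq_hist_of_seq D c0 t _ (tstar_image D c0 t f) hww
      have : w = play t :=
        eq_fun_of_pref (fun n => by rw [hkey n, hist_eq_pref_play])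
      rwa [← this]
    · exact absurd hbad hnb
  · -- agent b has a winning strategy in the Gale-Stewart game
    right
    refine ⟨fun γ => σ (iota D c0 γ), fun t ht => ?_⟩
    set f : List C → C := fun δ => if Even δ.length then c0 else σ δ with hf
    have hagree : ∀ δ ∉ {γ : List C | Even γ.length}, tstar D c0 t f δ = σ δ := by
      intro δ hδ
      have hδe : ¬ Even δ.length := hδ
      by_cases h : ∃ γ, iota D c0 γ = δ
      · obtain ⟨γ, rfl⟩ := h
        rw [tstar_image]
        exact ht γ (fun hmem => hδe ((iota_parity D c0 hD γ).mp hmem))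
      · rw [tstar_nonimage D c0 t f δ h, hf]
        exact if_neg hδe
    have hnin : play (tstar D c0 t f) ∉ iotaSeq D c0 '' W' ∪ badB D c0 := hσ _ hagree
    have hnb : play (tstar D c0 t f) ∉ badB D c0 := fun h => hnin (Or.inr h)
    have hfaith : ∀ n, pref (play (tstar D c0 t f)) (iota D c0 (hist t n)).length
        = iota D c0 (hist t n) := by
      intro n
      induction n with
      | zero => simp [hist, pref, iota, iotaFrom]
      | succ n ih =>
        have hc : play (tstar D c0 t f) (iota D c0 (hist t n)).length = t (hist t n) :=
          play_tstar_at D c0 t f ih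
        show pref (play (tstar D c0 t f)) (iota D c0 (hist t n ++ [t (hist t n)])).length
            = iota D c0 (hist t n ++ [t (hist t n)])
        by_cases hs : hist t n ∈ D ↔ hist t n ++ [t (hist t n)] ∈ D
        · rw [iota_snoc_pos D c0 hs]
          have hd0 : play (tstar D c0 t f) ((iota D c0 (hist t n)).length + 1) = c0 := by
            rw [play_tstar_dummy D c0 t f ih hs, hf]
            beta_reduce
            by_cases he : Even ((iota D c0 (hist t n) ++ [t (hist t n)]).length)
            · rw [if_pos he]
            · rw [if_neg he]
              by_contra hne
              apply hnb
              rw [mem_badB_iff]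
              refine ⟨hist t n, ih, by rw [hc]; exact hs, ?_, ?_⟩
              · rw [← Nat.not_even_iff_odd]
                simpa using he
              · rw [play_tstar_dummy D c0 t f ih hs, hf]
                beta_reduce
                rw [if_neg he]
                exact hne
          have hlen : (iota D c0 (hist t n) ++ [t (hist t n), c0]).length
              = (iota D c0 (hist t n)).length + 1 + 1 := by simp
          rw [hlen, pref_snoc, pref_snoc, ih, hc, hd0]
          simp
        · rw [iota_snoc_neg D c0 hs]
          have hlen : (iota D c0 (hist t n) ++ [t (hist t n)]).length
              = (iota D c0 (hist t n)).length + 1 := by simp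
          rw [hlen, pref_snoc, ih, hc]
    intro hcon
    apply hnin
    left
    refine ⟨play t, hcon, ?_⟩
    funext k
    rw [iotaSeq_def]
    have hpe : pref (play t) (k+1) = hist t (k+1) := (hist_eq_pref_play t (k+1)).symm
    rw [hpe]
    have hk : k < (iota D c0 (hist t (k+1))).length :=
      lt_of_lt_of_le (by rw [hist_length]; omega) (length_le_iota D c0 _)
    rw [List.getD_eq_getElem _ _ hk]
    have h2 := List.getElem_of_eq (hfaith (k+1)).symm hk
    rw [h2, pref_getElem]

end Part2

/-- Quasi-Borel sets are closed under the dummy-insertion map ι;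
consequently, given quasi-Borel determinacy of Gale-Stewart games, every game
⟨C, D, W'⟩ with quasi-Borel W' and arbitrary D ⊆ C* is determined. -/
theorem quasiBorel_iota_and_determinacy {C : Type u} [Nonempty C] (c0 : C) :
    (∀ D : Set (List C), ([] : List C) ∈ D →
      ∀ W : Set (ℕ → C), QB W → QB (iotaSeq D c0 '' W)) ∧
    ((∀ W : Set (ℕ → C), QB W → Determined {γ : List C | Even γ.length} W) →
      ∀ (D : Set (List C)) (W' : Set (ℕ → C)), QB W' → Determined D W') := by
  constructor
  · exact fun D _ W hW => qb_image D c0 W hW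
  · intro H D W' hW'
    by_cases h : ([] : List C) ∈ D
    · exact part2_main D c0 H h W' hW'
    · letI : TopologicalSpace (ℕ → C) := seqTop C
      exact determined_symm (part2_main Dᶜ c0 H h W'ᶜ (QuasiBorel.compl _ hW'))
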